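/- Let (X,μ) be a measure space and let u, r ∈ L⁶(X,μ) with u ≥ 0, u + r ≥ 0, and ∫ u⁵·r dμ = 0. Then ‖u+r‖₆² ≤ ‖u‖₆² + ‖u‖₆^(-4)·( 5·∫ u⁴·r² dμ + (20/3)·∫ u³·r³ dμ + 5·∫ u²·r⁴ dμ + 2·∫ u·r⁵ dμ + (1/3)·∫ r⁶ dμ ). -/

import Mathlib

open MeasureTheory

theorem l6_norm_sq_expansion {X : Type*} [MeasurableSpace X]
    (μ : Measure X) (u r : X → ℝ)
    (hu : MemLp u 6 μ) (hr : MemLp r 6 μ)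
    (hu0 : ∀ x, 0 ≤ u x) (hur : ∀ x, 0 ≤ u x + r x)
    (hune : ¬ u =ᵐ[μ] 0)
    (horth : ∫ x, (u x) ^ 5 * r x ∂μ = 0) :
    (eLpNorm (u + r) 6 μ).toReal ^ 2
      ≤ (eLpNorm u 6 μ).toReal ^ 2
        + (eLpNorm u 6 μ).toReal ^ (-4 : ℝ)
          * (5 * ∫ x, (u x) ^ 4 * (r x) ^ 2 ∂μ
             + (20 / 3) * ∫ x, (u x) ^ 3 * (r x) ^ 3 ∂μ
             + 5 * ∫ x, (u x) ^ 2 * (r x) ^ 4 ∂μ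
             + 2 * ∫ x, u x * (r x) ^ 5 ∂μ
             + (1 / 3) * ∫ x, (r x) ^ 6 ∂μ) := by
  have h6top : (6 : ENNReal) ≠ ⊤ := by norm_num
  have h60 : (6 : ENNReal) ≠ 0 := by norm_num
  have h6 : ((6 : ENNReal)).toReal = 6 := by norm_num
  set a := (eLpNorm u 6 μ).toReal with ha_def
  set b := (eLpNorm (u + r) 6 μ).toReal with hb_def
  -- positivity of a
  have ha_pos : 0 < a := by
    apply ENNReal.toReal_pos
    · intro h
      exact hune ((eLpNorm_eq_zero_iff hu.1 h60).mp h)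
    · exact hu.2.ne
  have hb_nonneg : 0 ≤ b := ENNReal.toReal_nonneg
  -- dominating integrable function
  have hrpow : ∀ y : ℝ, y ^ (6:ℝ) = y ^ (6:ℕ) := fun y => by
    rw [show (6:ℝ) = ((6:ℕ):ℝ) by norm_num, Real.rpow_natCast]
  have hiu : Integrable (fun x => |u x| ^ 6) μ := by
    have := hu.integrable_norm_rpow h60 h6top
    simp only [h6, Real.norm_eq_abs, hrpow] at this
    exact this
  have hir : Integrable (fun x => |r x| ^ 6) μ := by
    have := hr.integrable_norm_rpow h60 h6top
    simp only [h6, Real.norm_eq_abs, hrpow] at this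
    exact this
  have hdom : Integrable (fun x => |u x| ^ 6 + |r x| ^ 6) μ := hiu.add hir
  have key : ∀ k : ℕ, k ≤ 6 → Integrable (fun x => u x ^ k * r x ^ (6 - k)) μ := by
    intro k hk
    have hmeas : AEStronglyMeasurable (fun x => u x ^ k * r x ^ (6 - k)) μ :=
      ((hu.1.aemeasurable.pow_const k).mul (hr.1.aemeasurable.pow_const (6 - k))).aestronglyMeasurable
    refine Integrable.mono' hdom hmeas (Filter.Eventually.of_forall fun x => ?_)
    have hm : ∀ y : ℝ, |y| ≤ max |u x| |r x| → |y| ^ 6 ≤ |u x| ^ 6 + |r x| ^ 6 := by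
      intro y hy
      have h1 : |y| ^ 6 ≤ (max |u x| |r x|) ^ 6 := pow_le_pow_left₀ (abs_nonneg _) hy 6
      rcases max_cases |u x| |r x| with ⟨h, _⟩ | ⟨h, _⟩ <;> rw [h] at h1 <;>
        [exact h1.trans (le_add_of_nonneg_right (by positivity));
         exact h1.trans (le_add_of_nonneg_left (by positivity))]
    have : ‖u x ^ k * r x ^ (6 - k)‖ = |u x| ^ k * |r x| ^ (6 - k) := by
      rw [Real.norm_eq_abs, abs_mul, abs_pow, abs_pow]
    rw [this]
    set m := max |u x| |r x| with hm_def
    have hmu : |u x| ≤ m := le_max_left _ _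
    have hmr : |r x| ≤ m := le_max_right _ _
    have hm0 : 0 ≤ m := le_trans (abs_nonneg _) hmu
    have h1 : |u x| ^ k * |r x| ^ (6 - k) ≤ m ^ k * m ^ (6 - k) :=
      mul_le_mul (pow_le_pow_left₀ (abs_nonneg _) hmu k)
        (pow_le_pow_left₀ (abs_nonneg _) hmr (6 - k)) (by positivity) (by positivity)
    have h2 : m ^ k * m ^ (6 - k) = m ^ 6 := by
      rw [← pow_add]; congr 1; omega
    rw [h2] at h1
    refine h1.trans ?_
    rcases max_cases |u x| |r x| with ⟨h, _⟩ | ⟨h, _⟩ <;> rw [hm_def, h] <;>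
      [exact le_add_of_nonneg_right (by positivity);
       exact le_add_of_nonneg_left (by positivity)]
  have I0 : Integrable (fun x => u x ^ 6) μ := by
    have := key 6 le_rfl; simpa using this
  have I1 : Integrable (fun x => u x ^ 5 * r x) μ := by
    have := key 5 (by norm_num); simpa using this
  have I2 : Integrable (fun x => u x ^ 4 * r x ^ 2) μ := key 4 (by norm_num)
  have I3 : Integrable (fun x => u x ^ 3 * r x ^ 3) μ := key 3 (by norm_num)
  have I4 : Integrable (fun x => u x ^ 2 * r x ^ 4) μ := key 2 (by norm_num)
  have I5 : Integrable (fun x => u x * r x ^ 5) μ := by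
    have := key 1 (by norm_num); simpa using this
  have I6 : Integrable (fun x => r x ^ 6) μ := by
    have := key 0 (by norm_num); simpa using this
  -- expansion of the integral
  have hexp : ∫ x, (u x + r x) ^ 6 ∂μ
      = (∫ x, u x ^ 6 ∂μ) + 6 * (∫ x, u x ^ 5 * r x ∂μ) + 15 * (∫ x, u x ^ 4 * r x ^ 2 ∂μ)
        + 20 * (∫ x, u x ^ 3 * r x ^ 3 ∂μ) + 15 * (∫ x, u x ^ 2 * r x ^ 4 ∂μ)
        + 6 * (∫ x, u x * r x ^ 5 ∂μ) + ∫ x, r x ^ 6 ∂μ := by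
    have hpt : ∀ x, (u x + r x) ^ 6
        = u x ^ 6 + (6 * (u x ^ 5 * r x) + (15 * (u x ^ 4 * r x ^ 2)
          + (20 * (u x ^ 3 * r x ^ 3) + (15 * (u x ^ 2 * r x ^ 4)
            + (6 * (u x * r x ^ 5) + r x ^ 6))))) := fun x => by ring
    have s5 : Integrable (fun x => 6 * (u x * r x ^ 5) + r x ^ 6) μ := (I5.const_mul 6).add I6
    have s4 : Integrable (fun x => 15 * (u x ^ 2 * r x ^ 4)
        + (6 * (u x * r x ^ 5) + r x ^ 6)) μ := (I4.const_mul 15).add s5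
    have s3 : Integrable (fun x => 20 * (u x ^ 3 * r x ^ 3) + (15 * (u x ^ 2 * r x ^ 4)
        + (6 * (u x * r x ^ 5) + r x ^ 6))) μ := (I3.const_mul 20).add s4
    have s2 : Integrable (fun x => 15 * (u x ^ 4 * r x ^ 2) + (20 * (u x ^ 3 * r x ^ 3)
        + (15 * (u x ^ 2 * r x ^ 4) + (6 * (u x * r x ^ 5) + r x ^ 6)))) μ :=
      (I2.const_mul 15).add s3
    have s1 : Integrable (fun x => 6 * (u x ^ 5 * r x) + (15 * (u x ^ 4 * r x ^ 2)
        + (20 * (u x ^ 3 * r x ^ 3) + (15 * (u x ^ 2 * r x ^ 4)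
          + (6 * (u x * r x ^ 5) + r x ^ 6))))) μ := (I1.const_mul 6).add s2
    simp_rw [hpt]
    rw [integral_add I0 s1, integral_add (I1.const_mul 6) s2,
      integral_add (I2.const_mul 15) s3, integral_add (I3.const_mul 20) s4,
      integral_add (I4.const_mul 15) s5, integral_add (I5.const_mul 6) I6,
      integral_const_mul, integral_const_mul, integral_const_mul, integral_const_mul,
      integral_const_mul]
    ring
  -- a^6 and b^6 as integrals
  have pow_eq : ∀ (f : X → ℝ), (∀ x, 0 ≤ f x) → MemLp f 6 μ →
      ((eLpNorm f 6 μ).toReal) ^ 6 = ∫ x, f x ^ 6 ∂μ := by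
    intro f hf0 hf
    have hI : 0 ≤ ∫ x, f x ^ 6 ∂μ := integral_nonneg fun x => by positivity
    rw [hf.eLpNorm_eq_integral_rpow_norm h60 h6top]
    rw [ENNReal.toReal_ofReal (by positivity)]
    have hint : ∫ x, ‖f x‖ ^ ((6:ENNReal)).toReal ∂μ = ∫ x, f x ^ 6 ∂μ := by
      refine integral_congr_ae (Filter.Eventually.of_forall fun x => ?_)
      show ‖f x‖ ^ (6:ENNReal).toReal = f x ^ 6
      rw [h6, Real.norm_eq_abs, abs_of_nonneg (hf0 x), hrpow]
    rw [hint]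
    rw [← Real.rpow_natCast (_ ^ _) 6, ← Real.rpow_mul hI]
    norm_num
  have ha6 : a ^ 6 = ∫ x, u x ^ 6 ∂μ := pow_eq u hu0 hu
  have hb6 : b ^ 6 = ∫ x, (u x + r x) ^ 6 ∂μ := by
    have := pow_eq (u + r) hur (hu.add hr)
    simpa using this
  -- combine
  have hb6' : b ^ 6 = a ^ 6 + 15 * (∫ x, u x ^ 4 * r x ^ 2 ∂μ)
      + 20 * (∫ x, u x ^ 3 * r x ^ 3 ∂μ) + 15 * (∫ x, u x ^ 2 * r x ^ 4 ∂μ)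
      + 6 * (∫ x, u x * r x ^ 5 ∂μ) + ∫ x, r x ^ 6 ∂μ := by
    rw [hb6, hexp, ← ha6, horth]; ring
  have hapow : a ^ (-4 : ℝ) = (a ^ 4)⁻¹ := by
    rw [show (-4 : ℝ) = -((4:ℕ):ℝ) by norm_num, Real.rpow_neg ha_pos.le, Real.rpow_natCast]
  rw [hapow]
  have hP : 5 * (∫ x, u x ^ 4 * r x ^ 2 ∂μ) + 20 / 3 * (∫ x, u x ^ 3 * r x ^ 3 ∂μ)
      + 5 * (∫ x, u x ^ 2 * r x ^ 4 ∂μ) + 2 * (∫ x, u x * r x ^ 5 ∂μ)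
      + 1 / 3 * (∫ x, r x ^ 6 ∂μ) = (b ^ 6 - a ^ 6) / 3 := by
    rw [hb6']; ring
  rw [hP]
  -- AM-GM: 3 a^4 b^2 ≤ 2 a^6 + b^6
  have hamgm : 3 * a ^ 4 * b ^ 2 ≤ 2 * a ^ 6 + b ^ 6 := by
    nlinarith [mul_nonneg (sq_nonneg (a ^ 2 - b ^ 2))
      (by positivity : (0:ℝ) ≤ 2 * a ^ 2 + b ^ 2)]
  have heq : a ^ 2 + (a ^ 4)⁻¹ * ((b ^ 6 - a ^ 6) / 3) - b ^ 2
      = (2 * a ^ 6 + b ^ 6 - 3 * a ^ 4 * b ^ 2) / (3 * a ^ 4) := by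
    field_simp
    ring
  nlinarith [div_nonneg (by linarith : (0:ℝ) ≤ 2 * a ^ 6 + b ^ 6 - 3 * a ^ 4 * b ^ 2)
    (by positivity : (0:ℝ) ≤ 3 * a ^ 4), heq]
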